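/- Second moment bound for the regularized weight: Let ν be a Borel probability measure on ℝ^p × M with E_ν‖X‖² < ∞, covariate mean μ_ν and covariate covariance Σ_ν, and let x ∈ ℝ^p with ‖x − μ_ν‖_{Σ_ν} < ∞. Then for every λ ≥ 0, E_ν[ w^λ_ν(X,x)² ] ≤ 2·( 1 + p·‖x − μ_ν‖²_{Σ_ν} ). -/

import Mathlib

open MeasureTheory Matrix Filter
open scoped ENNReal NNReal Topology Classical

noncomputable section

namespace FrechetPCR

/-- The four Penrose conditions characterizing the Moore–Penrose pseudoinverse. -/
def IsMoorePenrose {n m : ℕ} (A : Matrix (Fin n) (Fin m) ℝ) (B : Matrix (Fin m) (Fin n) ℝ) : Prop :=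
  A * B * A = A ∧ B * A * B = B ∧ (A * B)ᵀ = A * B ∧ (B * A)ᵀ = B * A

/-- The Moore–Penrose pseudoinverse of a real matrix (it exists and is unique). -/
def pinv {n m : ℕ} (A : Matrix (Fin n) (Fin m) ℝ) : Matrix (Fin m) (Fin n) ℝ :=
  if h : ∃ B, IsMoorePenrose A B then h.choose else 0

/-- Spectral projection of a symmetric matrix onto the span of eigenvectors
with eigenvalue > t. -/
def specProjGT {m : ℕ} (S : Matrix (Fin m) (Fin m) ℝ) (t : ℝ) : Matrix (Fin m) (Fin m) ℝ :=
  if hS : S.IsHermitian then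
    (hS.eigenvectorUnitary : Matrix (Fin m) (Fin m) ℝ) *
      Matrix.diagonal (fun i => if t < hS.eigenvalues i then (1 : ℝ) else 0) *
      star (hS.eigenvectorUnitary : Matrix (Fin m) (Fin m) ℝ)
  else 0

/-- Hard singular value thresholding: retains the part of `A` corresponding to
singular values exceeding `l` (for `l ≥ 0`): if `A = Σ sᵢ uᵢ vᵢᵀ` is an SVD then
`SVT l A = Σ sᵢ 1{sᵢ > l} uᵢ vᵢᵀ = A · Π` where `Π` is the spectral projection of
`AᵀA` onto eigenvalues `> l²`. -/
def SVT {n m : ℕ} (l : ℝ) (A : Matrix (Fin n) (Fin m) ℝ) : Matrix (Fin n) (Fin m) ℝ :=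
  A * specProjGT (Aᵀ * A) (l ^ 2)

/-- Mahalanobis seminorm of `v` induced by the positive semidefinite matrix `S`. -/
def mahal {p : ℕ} (S : Matrix (Fin p) (Fin p) ℝ) (v : Fin p → ℝ) : ℝ :=
  Real.sqrt (v ⬝ᵥ pinv S *ᵥ v)

/-- Euclidean (ℓ²) norm of a vector. -/
def euclNorm {n : ℕ} (v : Fin n → ℝ) : ℝ :=
  Real.sqrt (∑ i, v i ^ 2)

/-- Spectral (ℓ²-operator) norm of a matrix. -/
def spectralNorm {n m : ℕ} (A : Matrix (Fin n) (Fin m) ℝ) : ℝ :=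
  ‖(Matrix.toEuclideanLin A).toContinuousLinearMap‖

/-- `σ^λ(A)`: the smallest singular value of `A` exceeding `l`
(with junk value `sInf ∅ = 0` when no singular value exceeds `l`). -/
def sigmaGT {n m : ℕ} (A : Matrix (Fin n) (Fin m) ℝ) (l : ℝ) : ℝ :=
  sInf {s : ℝ | 0 ≤ s ∧ l < s ∧ s ^ 2 ∈ spectrum ℝ (Aᵀ * A)}

/-- Covariate mean of a measure on ℝ^p × M. -/
def covMean {p : ℕ} {M : Type*} [MeasurableSpace M] (ν : Measure ((Fin p → ℝ) × M)) :
    Fin p → ℝ :=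
  ∫ z, z.1 ∂ν

/-- Covariate covariance of a measure on ℝ^p × M. -/
def covCov {p : ℕ} {M : Type*} [MeasurableSpace M] (ν : Measure ((Fin p → ℝ) × M)) :
    Matrix (Fin p) (Fin p) ℝ :=
  Matrix.of fun i j => ∫ z, (z.1 i - covMean ν i) * (z.1 j - covMean ν j) ∂ν

/-- λ-regularized weight function
`w^λ_ν(x',x) = 1 + (x'−μ_ν)ᵀ [SVT_λ(Σ_ν)]† (x−μ_ν)`. -/
def weight {p : ℕ} {M : Type*} [MeasurableSpace M] (l : ℝ) (ν : Measure ((Fin p → ℝ) × M))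
    (x' x : Fin p → ℝ) : ℝ :=
  1 + (x' - covMean ν) ⬝ᵥ pinv (SVT l (covCov ν)) *ᵥ (x - covMean ν)

/-- λ-regularized Fréchet risk `R^λ_ν(y;x) = E_ν[ w^λ_ν(X,x) · d²(Y,y) ]`. -/
def risk {p : ℕ} {M : Type*} [MetricSpace M] [MeasurableSpace M] (l : ℝ)
    (ν : Measure ((Fin p → ℝ) × M)) (y : M) (x : Fin p → ℝ) : ℝ :=
  ∫ z, weight l ν z.1 x * dist z.2 y ^ 2 ∂ν

/-- Empirical measure of a finite dataset. -/
def empOf {E : Type*} [MeasurableSpace E] {n : ℕ} (D : Fin n → E) : Measure E :=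
  (n : ℝ≥0∞)⁻¹ • ∑ i, Measure.dirac (D i)

/-- Empirical measure of the first `n` elements of a sequence of observations. -/
def empSeq {E : Type*} [MeasurableSpace E] (D : ℕ → E) (n : ℕ) : Measure E :=
  (n : ℝ≥0∞)⁻¹ • ∑ i ∈ Finset.range n, Measure.dirac (D i)

/-- ε-covering number of a set in a metric space: the minimal cardinality of a cover
by closed ε-balls (`⊤` if no finite cover exists). -/
def coveringNumber {M : Type*} [MetricSpace M] (S : Set M) (ε : ℝ) : ℝ≥0∞ :=
  ⨅ (t : Finset M) (_ : S ⊆ ⋃ y ∈ t, Metric.closedBall y ε), (t.card : ℝ≥0∞)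

/-- The n×n centering matrix `I − (1/n) 1ₙ 1ₙᵀ`. -/
def centering (n : ℕ) : Matrix (Fin n) (Fin n) ℝ :=
  1 - (n : ℝ)⁻¹ • Matrix.of fun _ _ => (1 : ℝ)



-- ### Auxiliary lemmas ###

theorem mp_unique {n m : ℕ} {A : Matrix (Fin n) (Fin m) ℝ} {B C : Matrix (Fin m) (Fin n) ℝ}
    (hB : IsMoorePenrose A B) (hC : IsMoorePenrose A C) : B = C := by
  obtain ⟨hB1, hB2, hB3, hB4⟩ := hB
  obtain ⟨hC1, hC2, hC3, hC4⟩ := hC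
  have hAB : A * B = A * C := by
    calc A * B = (A * B)ᵀ := hB3.symm
    _ = Bᵀ * (A * C * A)ᵀ := by rw [transpose_mul, hC1]
    _ = (A * B)ᵀ * (A * C)ᵀ := by simp only [transpose_mul, Matrix.mul_assoc]
    _ = (A * B * A) * C := by rw [hB3, hC3]; simp only [Matrix.mul_assoc]
    _ = A * C := by rw [hB1]
  have hBA : B * A = C * A := by
    calc B * A = B * (A * C * A) := by rw [hC1]
    _ = (B * A) * (C * A) := by simp only [Matrix.mul_assoc]
    _ = (B * A)ᵀ * (C * A)ᵀ := by rw [hB4, hC4]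
    _ = ((C * A) * (B * A))ᵀ := (transpose_mul _ _).symm
    _ = (C * (A * B * A))ᵀ := by simp only [Matrix.mul_assoc]
    _ = C * A := by rw [hB1, hC4]
  calc B = B * A * B := hB2.symm
  _ = B * (A * C) := by rw [Matrix.mul_assoc, hAB]
  _ = (C * A) * C := by rw [← Matrix.mul_assoc, hBA]
  _ = C := hC2


theorem pinv_eq {n m : ℕ} {A : Matrix (Fin n) (Fin m) ℝ} {B : Matrix (Fin m) (Fin n) ℝ}
    (h : IsMoorePenrose A B) : pinv A = B := by
  have hex : ∃ B, IsMoorePenrose A B := ⟨B, h⟩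
  unfold pinv
  rw [dif_pos hex]
  exact mp_unique hex.choose_spec h

lemma contOn_finite {s : Set ℝ} (hs : s.Finite) (f : ℝ → ℝ) : ContinuousOn f s := by
  rw [continuousOn_iff_continuous_restrict]
  have := hs.to_subtype
  exact continuous_of_discreteTopology

lemma contOnSpec {m : ℕ} (S : Matrix (Fin m) (Fin m) ℝ) (f : ℝ → ℝ) :
    ContinuousOn f (spectrum ℝ S) := contOn_finite S.finite_real_spectrum f

lemma transpose_eq_of_selfAdjoint {m : ℕ} {A : Matrix (Fin m) (Fin m) ℝ}
    (hA : IsSelfAdjoint A) : Aᵀ = A := by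
  have := hA.star_eq
  rwa [Matrix.star_eq_conjTranspose, show Aᴴ = Aᵀ by ext; simp [conjTranspose]] at this

lemma specProjGT_eq_cfc {m : ℕ} {S : Matrix (Fin m) (Fin m) ℝ} (hS : S.IsHermitian) (t : ℝ) :
    specProjGT S t = cfc (fun x => if t < x then (1 : ℝ) else 0) S := by
  rw [hS.cfc_eq, Matrix.IsHermitian.cfc]
  unfold specProjGT
  rw [dif_pos hS]
  have : (fun i => if t < hS.eigenvalues i then (1 : ℝ) else 0)
      = RCLike.ofReal ∘ (fun x => if t < x then (1 : ℝ) else 0) ∘ hS.eigenvalues := by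
    ext i; simp
  rw [this]
  rfl

lemma spectrum_nonneg {m : ℕ} {S : Matrix (Fin m) (Fin m) ℝ} (hS : S.PosSemidef) :
    ∀ x ∈ spectrum ℝ S, 0 ≤ x := by
  intro x hx
  rw [hS.isHermitian.spectrum_real_eq_range_eigenvalues] at hx
  obtain ⟨i, rfl⟩ := hx
  exact hS.eigenvalues_nonneg i

lemma cfc_posSemidef {m : ℕ} {S : Matrix (Fin m) (Fin m) ℝ} (hS : S.IsHermitian) {f : ℝ → ℝ}
    (hf : ∀ x ∈ spectrum ℝ S, 0 ≤ f x) : (cfc f S).PosSemidef := by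
  rw [hS.cfc_eq, Matrix.IsHermitian.cfc]
  have hD : (Matrix.diagonal (RCLike.ofReal ∘ f ∘ hS.eigenvalues) :
      Matrix (Fin m) (Fin m) ℝ).PosSemidef := by
    rw [Matrix.posSemidef_diagonal_iff]
    intro i
    simp only [Function.comp_apply, RCLike.ofReal_real_eq_id, id_eq]
    exact hf _ (by rw [hS.spectrum_real_eq_range_eigenvalues]; exact ⟨i, rfl⟩)
  have := hD.mul_mul_conjTranspose_same
    (hS.eigenvectorUnitary : Matrix (Fin m) (Fin m) ℝ)
  simpa [Matrix.star_eq_conjTranspose] using this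

lemma SVT_eq_cfc {m : ℕ} {S : Matrix (Fin m) (Fin m) ℝ} (hS : S.PosSemidef) {l : ℝ}
    (hl : 0 ≤ l) :
    SVT l S = cfc (fun x => if l < x then x else 0) S := by
  have hH : IsSelfAdjoint S := hS.isHermitian
  have hT : Sᵀ = S := transpose_eq_of_selfAdjoint hH
  have hsq : Sᵀ * S = cfc (fun x : ℝ => x * x) S := by
    rw [hT, cfc_mul _ _ S (contOnSpec S _) (contOnSpec S _), cfc_id' ℝ S]
  have hherm2 : (Sᵀ * S).IsHermitian := by
    have : IsSelfAdjoint (Sᵀ * S) := by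
      rw [hsq]; exact cfc_predicate _ S
    exact this
  unfold SVT
  rw [specProjGT_eq_cfc hherm2, hsq,
    ← cfc_comp (fun x => if l ^ 2 < x then (1 : ℝ) else 0) (fun x : ℝ => x * x) S hH
      (contOn_finite (Set.Finite.image _ S.finite_real_spectrum) _) (contOnSpec S _)]
  have : S * cfc ((fun x => if l ^ 2 < x then (1 : ℝ) else 0) ∘ fun x : ℝ => x * x) S
      = cfc (fun x : ℝ => x * ((fun x => if l ^ 2 < x then (1 : ℝ) else 0) ∘
        fun x : ℝ => x * x) x) S := by
    rw [cfc_mul _ _ S (contOnSpec S _) (contOnSpec S _), cfc_id' ℝ S]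
  rw [this]
  apply cfc_congr
  intro x hx
  have hx0 : 0 ≤ x := spectrum_nonneg hS x hx
  simp only [Function.comp_apply]
  by_cases h : l < x
  · rw [if_pos h, if_pos (by nlinarith), mul_one]
  · rw [if_neg h, if_neg (by push_neg at h; nlinarith), mul_zero]


variable {q : ℕ} {S : Matrix (Fin q) (Fin q) ℝ} {l : ℝ}

/-- function for SVT l S -/
private def fS (l : ℝ) (x : ℝ) : ℝ := if l < x then x else 0
/-- function for pinv (SVT l S) -/
private def fB (l : ℝ) (x : ℝ) : ℝ := if l < x then x⁻¹ else 0
/-- function for pinv S -/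
private def fP (x : ℝ) : ℝ := if x = 0 then 0 else x⁻¹

lemma mp_SVT (hS : S.PosSemidef) (hl : 0 ≤ l) :
    IsMoorePenrose (cfc (fS l) S) (cfc (fB l) S) := by
  have hmul : ∀ f g : ℝ → ℝ, cfc f S * cfc g S = cfc (fun x => f x * g x) S := fun f g =>
    (cfc_mul f g S (contOnSpec S f) (contOnSpec S g)).symm
  have hx0 : ∀ x : ℝ, l < x → x ≠ 0 := fun x hx => ne_of_gt (lt_of_le_of_lt hl hx)
  have h1 : (fun x => fS l x * fB l x * fS l x) = fS l := by
    funext x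
    by_cases h : l < x
    · simp only [fS, fB, if_pos h]
      field_simp [hx0 x h]
    · simp [fS, fB, if_neg h]
  have h2 : (fun x => fB l x * fS l x * fB l x) = fB l := by
    funext x
    by_cases h : l < x
    · simp only [fS, fB, if_pos h]
      field_simp
    · simp [fS, fB, if_neg h]
  refine ⟨?_, ?_, ?_, ?_⟩
  · rw [hmul, hmul]
    simp only [h1]
  · rw [hmul, hmul]
    simp only [h2]
  · rw [hmul]
    exact transpose_eq_of_selfAdjoint (cfc_predicate _ S)
  · rw [hmul]
    exact transpose_eq_of_selfAdjoint (cfc_predicate _ S)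

lemma mp_pinv_self (hS : S.PosSemidef) : IsMoorePenrose S (cfc fP S) := by
  have hsa : IsSelfAdjoint S := hS.isHermitian.isSelfAdjoint
  have hmul : ∀ f g : ℝ → ℝ, cfc f S * cfc g S = cfc (fun x => f x * g x) S := fun f g =>
    (cfc_mul f g S (contOnSpec S f) (contOnSpec S g)).symm
  have hid : cfc (fun x : ℝ => x) S = S := cfc_id' ℝ S
  have hSmul : ∀ f : ℝ → ℝ, S * cfc f S = cfc (fun x => x * f x) S := by
    intro f
    nth_rewrite 1 [← hid]
    rw [hmul]
  have hmulS : ∀ f : ℝ → ℝ, cfc f S * S = cfc (fun x => f x * x) S := by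
    intro f
    nth_rewrite 2 [← hid]
    rw [hmul]
  have hPS2 := hmulS fP
  refine ⟨?_, ?_, ?_, ?_⟩
  · rw [hSmul, hmulS]
    have : (fun x : ℝ => x * fP x * x) = fun x : ℝ => x := by
      funext x
      by_cases h : x = 0 <;> simp [fP, h] <;> field_simp
    rw [this, hid]
  · rw [hPS2, hmul]
    have : (fun x : ℝ => fP x * x * fP x) = fP := by
      funext x
      by_cases h : x = 0 <;> simp [fP, h] <;> field_simp
    rw [this]
  · rw [hSmul]
    exact transpose_eq_of_selfAdjoint (cfc_predicate _ S)
  · rw [hmulS]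
    exact transpose_eq_of_selfAdjoint (cfc_predicate _ S)

lemma pinv_SVT_eq (hS : S.PosSemidef) (hl : 0 ≤ l) :
    pinv (SVT l S) = cfc (fB l) S := by
  rw [show SVT l S = cfc (fS l) S from SVT_eq_cfc hS hl]
  exact pinv_eq (mp_SVT hS hl)

lemma pinv_self_eq (hS : S.PosSemidef) : pinv S = cfc fP S :=
  pinv_eq (mp_pinv_self hS)

lemma pinv_posSemidef (hS : S.PosSemidef) : (pinv S).PosSemidef := by
  rw [pinv_self_eq hS]
  refine cfc_posSemidef hS.isHermitian fun x hx => ?_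
  have := spectrum_nonneg hS x hx
  by_cases h : x = 0 <;> simp [fP, h]
  positivity

theorem key_ineq (hS : S.PosSemidef) (hl : 0 ≤ l) (v : Fin q → ℝ) :
    (pinv (SVT l S) *ᵥ v) ⬝ᵥ S *ᵥ (pinv (SVT l S) *ᵥ v) ≤ v ⬝ᵥ pinv S *ᵥ v := by
  have hsa : IsSelfAdjoint S := hS.isHermitian.isSelfAdjoint
  have hmul : ∀ f g : ℝ → ℝ, cfc f S * cfc g S = cfc (fun x => f x * g x) S := fun f g =>
    (cfc_mul f g S (contOnSpec S f) (contOnSpec S g)).symm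
  set B := pinv (SVT l S) with hBdef
  have hB : B = cfc (fB l) S := pinv_SVT_eq hS hl
  have hBsym : Bᵀ = B := by
    rw [hB]; exact transpose_eq_of_selfAdjoint (cfc_predicate _ S)
  have hid : cfc (fun x : ℝ => x) S = S := cfc_id' ℝ S
  have hSmul : ∀ f : ℝ → ℝ, S * cfc f S = cfc (fun x => x * f x) S := by
    intro f
    nth_rewrite 1 [← hid]
    rw [hmul]
  have h1 : v ᵥ* B = B *ᵥ v := by
    calc v ᵥ* B = v ᵥ* Bᵀ := by rw [hBsym]
    _ = B *ᵥ v := vecMul_transpose B v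
  have hLHS : (B *ᵥ v) ⬝ᵥ S *ᵥ (B *ᵥ v) = v ⬝ᵥ (B * (S * B)) *ᵥ v := by
    rw [mulVec_mulVec, ← h1, ← dotProduct_mulVec, mulVec_mulVec]
  have hBSB : B * (S * B) = cfc (fun x => fB l x * (x * fB l x)) S := by
    rw [hB, hSmul, hmul]
  have hg : ∀ x ∈ spectrum ℝ S, 0 ≤ fP x - fB l x * (x * fB l x) := by
    intro x hx
    have hx0 : 0 ≤ x := spectrum_nonneg hS x hx
    by_cases h : l < x
    · have hxne : x ≠ 0 := ne_of_gt (lt_of_le_of_lt hl h)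
      simp only [fP, fB, if_pos h, if_neg hxne, mul_inv_cancel₀ hxne, mul_one, sub_self,
        le_refl]
    · simp only [fP, fB, if_neg h, mul_zero, zero_mul, sub_zero]
      by_cases hz : x = 0
      · simp [hz]
      · simp only [if_neg hz]
        have : 0 < x := lt_of_le_of_ne hx0 (Ne.symm hz)
        positivity
  have hsplit : cfc fP S = cfc (fun x => fB l x * (x * fB l x)) S
      + cfc (fun x => fP x - fB l x * (x * fB l x)) S := by
    rw [← cfc_add S (fun x => fB l x * (x * fB l x)) (fun x => fP x - fB l x * (x * fB l x))
      (contOnSpec S _) (contOnSpec S _)]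
    congr 1
    funext x
    ring
  rw [hLHS, pinv_self_eq hS, hsplit, ← hBSB, add_mulVec, dotProduct_add]
  refine le_add_of_nonneg_right ?_
  simpa using (cfc_posSemidef hS.isHermitian hg).dotProduct_mulVec_nonneg v


/-- **Second moment bound for the regularized weight** (eq. (C.14)). -/
theorem weight_second_moment
    {p : ℕ} {M : Type*} [MetricSpace M] [MeasurableSpace M]
    (ν : Measure ((Fin p → ℝ) × M)) [IsProbabilityMeasure ν]
    (hX2 : Integrable (fun z => ‖z.1‖ ^ 2) ν)
    (x : Fin p → ℝ) (l : ℝ) (hl : 0 ≤ l) :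
    ∫ z, weight l ν z.1 x ^ 2 ∂ν ≤
      2 * (1 + (p : ℝ) * mahal (covCov ν) (x - covMean ν) ^ 2) := by
  classical
  set μ := covMean ν with hμ
  set Sm := covCov ν with hSm
  set v : Fin p → ℝ := x - μ with hv
  set w₀ : Fin p → ℝ := pinv (SVT l Sm) *ᵥ v with hw₀
  set C : ℝ := ‖μ‖ with hC
  -- basic measurability
  have hm : ∀ i, Measurable fun z : (Fin p → ℝ) × M => z.1 i - μ i := fun i =>
    ((measurable_pi_apply i).comp measurable_fst).sub measurable_const
  -- coordinate bound
  have hbd : ∀ (z : (Fin p → ℝ) × M) (i : Fin p), |z.1 i - μ i| ≤ ‖z.1‖ + C := by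
    intro z i
    have h1 := abs_add_le (z.1 i) (-μ i)
    rw [← sub_eq_add_neg, abs_neg] at h1
    have h2 : |z.1 i| ≤ ‖z.1‖ := by simpa using norm_le_pi_norm z.1 i
    have h3 : |μ i| ≤ C := by simpa [hC] using norm_le_pi_norm μ i
    linarith
  have hsqbd : ∀ z : (Fin p → ℝ) × M, (‖z.1‖ + C) ^ 2 ≤ 2 * ‖z.1‖ ^ 2 + 2 * C ^ 2 := by
    intro z; nlinarith [sq_nonneg (‖z.1‖ - C)]
  have hDint : Integrable (fun z : (Fin p → ℝ) × M => 2 * ‖z.1‖ ^ 2 + 2 * C ^ 2) ν :=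
    (hX2.const_mul 2).add (integrable_const _)
  -- integrability of products of centered coordinates
  have he : ∀ i j, Integrable (fun z : (Fin p → ℝ) × M =>
      (z.1 i - μ i) * (z.1 j - μ j)) ν := by
    intro i j
    refine Integrable.mono hDint (((hm i).mul (hm j)).aestronglyMeasurable)
      (Filter.Eventually.of_forall fun z => ?_)
    have hn1 : 0 ≤ ‖z.1‖ + C := by positivity
    have hb1 := hbd z i
    have hb2 := hbd z j
    rw [Real.norm_eq_abs, abs_mul, Real.norm_eq_abs,
      abs_of_nonneg (by positivity : (0:ℝ) ≤ 2 * ‖z.1‖ ^ 2 + 2 * C ^ 2)]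
    calc |z.1 i - μ i| * |z.1 j - μ j| ≤ (‖z.1‖ + C) * (‖z.1‖ + C) :=
      mul_le_mul hb1 hb2 (abs_nonneg _) hn1
    _ = (‖z.1‖ + C) ^ 2 := (sq (‖z.1‖ + C)).symm
    _ ≤ 2 * ‖z.1‖ ^ 2 + 2 * C ^ 2 := hsqbd z
  -- integrability of centered coordinates
  have hbase : ∀ i, Integrable (fun z : (Fin p → ℝ) × M => z.1 i - μ i) ν := by
    intro i
    refine Integrable.mono ((integrable_const (1:ℝ)).add hDint) ((hm i).aestronglyMeasurable)
      (Filter.Eventually.of_forall fun z => ?_)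
    have hb1 := hbd z i
    have h4 : ‖z.1‖ + C ≤ 1 + (‖z.1‖ + C) ^ 2 := by nlinarith [sq_nonneg (‖z.1‖ + C - 1)]
    simp only [Pi.add_apply, Real.norm_eq_abs]
    rw [abs_of_nonneg (by positivity : (0:ℝ) ≤ (1:ℝ) + (2 * ‖z.1‖ ^ 2 + 2 * C ^ 2))]
    have := hsqbd z
    linarith
  -- expansion of a product of two linear forms
  have hexp : ∀ (a b : Fin p → ℝ) (z : (Fin p → ℝ) × M),
      (∑ i, a i * (z.1 i - μ i)) * (∑ j, b j * (z.1 j - μ j))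
        = ∑ i, ∑ j, (a i * b j) * ((z.1 i - μ i) * (z.1 j - μ j)) := by
    intro a b z
    rw [Finset.sum_mul_sum]
    exact Finset.sum_congr rfl fun i _ => Finset.sum_congr rfl fun j _ => by ring
  -- the covariance entries
  have hentry : ∀ i j, Sm i j = ∫ z, (z.1 i - μ i) * (z.1 j - μ j) ∂ν := by
    intro i j
    rw [hSm, hμ]
    rfl
  have hdot : ∀ a b : Fin p → ℝ, a ⬝ᵥ Sm *ᵥ b = ∑ i, ∑ j, (a i * b j) * Sm i j := by
    intro a b
    simp only [dotProduct, mulVec, Finset.mul_sum]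
    exact Finset.sum_congr rfl fun i _ => Finset.sum_congr rfl fun j _ => by ring
  -- quadratic form identity
  have hquad : ∀ a b : Fin p → ℝ,
      ∫ z, (∑ i, a i * (z.1 i - μ i)) * (∑ j, b j * (z.1 j - μ j)) ∂ν = a ⬝ᵥ Sm *ᵥ b := by
    intro a b
    have h1 : (fun z : (Fin p → ℝ) × M =>
        (∑ i, a i * (z.1 i - μ i)) * (∑ j, b j * (z.1 j - μ j)))
        = fun z => ∑ i, ∑ j, (a i * b j) * ((z.1 i - μ i) * (z.1 j - μ j)) :=
      funext fun z => hexp a b z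
    rw [h1, integral_finset_sum _ fun i _ =>
      integrable_finset_sum _ fun j _ => (he i j).const_mul _]
    rw [hdot]
    refine Finset.sum_congr rfl fun i _ => ?_
    rw [integral_finset_sum _ fun j _ => (he i j).const_mul _]
    refine Finset.sum_congr rfl fun j _ => ?_
    rw [integral_const_mul, hentry i j]
  -- covariance matrix is PSD
  have hPSD : Sm.PosSemidef := by
    constructor
    · ext i j
      rw [Matrix.conjTranspose_apply, star_trivial, hentry i j, hentry j i]
      congr 1
      funext z
      ring
    · intro a
      have := hquad a a
      have hnn : 0 ≤ ∫ z, (∑ i, a i * (z.1 i - μ i)) * (∑ j, a j * (z.1 j - μ j)) ∂ν :=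
        integral_nonneg fun z => mul_self_nonneg _
      rw [this] at hnn
      simpa [Finsupp.sum_fintype, dotProduct, mulVec, Finset.mul_sum, mul_assoc] using hnn
  -- the linear part of the weight
  set u : (Fin p → ℝ) × M → ℝ := fun z => ∑ i, w₀ i * (z.1 i - μ i) with hu
  have hu_eq : ∀ z : (Fin p → ℝ) × M, weight l ν z.1 x = 1 + u z := by
    intro z
    rw [weight, hu]
    congr 1
    rw [dotProduct]
    refine Finset.sum_congr rfl fun i _ => ?_
    rw [← hμ, ← hSm, ← hv, ← hw₀]
    simp only [Pi.sub_apply]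
    ring
  have hu_int : Integrable u ν := by
    rw [hu]
    exact integrable_finset_sum _ fun i _ => (hbase i).const_mul _
  have hu2_int : Integrable (fun z => u z ^ 2) ν := by
    have h1 : (fun z => u z ^ 2)
        = fun z : (Fin p → ℝ) × M =>
          ∑ i, ∑ j, (w₀ i * w₀ j) * ((z.1 i - μ i) * (z.1 j - μ j)) := by
      funext z
      rw [sq, hu]
      exact hexp w₀ w₀ z
    rw [h1]
    exact integrable_finset_sum _ fun i _ =>
      integrable_finset_sum _ fun j _ => (he i j).const_mul _
  have hw2_int : Integrable (fun z => weight l ν z.1 x ^ 2) ν := by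
    have h1 : (fun z => weight l ν z.1 x ^ 2)
        = fun z : (Fin p → ℝ) × M => 1 + 2 * u z + u z ^ 2 := by
      funext z
      rw [hu_eq z]
      ring
    rw [h1]
    exact ((integrable_const _).add (hu_int.const_mul 2)).add hu2_int
  -- value of ∫ u²
  have hu2val : ∫ z, u z ^ 2 ∂ν = w₀ ⬝ᵥ Sm *ᵥ w₀ := by
    have h1 : (fun z => u z ^ 2)
        = fun z : (Fin p → ℝ) × M =>
          (∑ i, w₀ i * (z.1 i - μ i)) * (∑ j, w₀ j * (z.1 j - μ j)) := by
      funext z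
      rw [sq, hu]
    rw [h1]
    exact hquad w₀ w₀
  -- key matrix inequality
  have hkey : w₀ ⬝ᵥ Sm *ᵥ w₀ ≤ v ⬝ᵥ pinv Sm *ᵥ v := by
    rw [hw₀]
    exact key_ineq hPSD hl v
  have h0 : 0 ≤ v ⬝ᵥ pinv Sm *ᵥ v := by
    simpa using (pinv_posSemidef hPSD).dotProduct_mulVec_nonneg v
  have hmah : mahal Sm v ^ 2 = v ⬝ᵥ pinv Sm *ᵥ v := by
    rw [mahal]
    exact Real.sq_sqrt h0
  -- putting it together
  have hptw : ∀ z : (Fin p → ℝ) × M, weight l ν z.1 x ^ 2 ≤ 2 + 2 * u z ^ 2 := by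
    intro z
    rw [hu_eq z]
    nlinarith [sq_nonneg (1 - u z)]
  have hint1 : ∫ z, weight l ν z.1 x ^ 2 ∂ν ≤ ∫ z, (2 + 2 * u z ^ 2) ∂ν :=
    integral_mono hw2_int ((integrable_const _).add (hu2_int.const_mul 2)) hptw
  have hint2 : ∫ z, (2 + 2 * u z ^ 2) ∂ν = 2 + 2 * ∫ z, u z ^ 2 ∂ν := by
    rw [integral_add (integrable_const _) (hu2_int.const_mul 2), integral_const,
      integral_const_mul]
    simp
  have hps : ∫ z, u z ^ 2 ∂ν ≤ (p : ℝ) * (v ⬝ᵥ pinv Sm *ᵥ v) := by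
    rcases Nat.eq_zero_or_pos p with hp0 | hp1
    · subst hp0
      rw [hu2val]
      simp [dotProduct]
    · calc ∫ z, u z ^ 2 ∂ν = w₀ ⬝ᵥ Sm *ᵥ w₀ := hu2val
      _ ≤ v ⬝ᵥ pinv Sm *ᵥ v := hkey
      _ ≤ (p : ℝ) * (v ⬝ᵥ pinv Sm *ᵥ v) := by
        refine le_mul_of_one_le_left h0 ?_
        exact_mod_cast hp1
  calc ∫ z, weight l ν z.1 x ^ 2 ∂ν ≤ 2 + 2 * ∫ z, u z ^ 2 ∂ν := by rw [← hint2]; exact hint1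
  _ ≤ 2 + 2 * ((p : ℝ) * (v ⬝ᵥ pinv Sm *ᵥ v)) := by linarith
  _ = 2 * (1 + (p : ℝ) * mahal Sm v ^ 2) := by rw [hmah]; ring

end FrechetPCR
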